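/- Let k = F_{q^n}, R = k{τ}, and let φ: F_q[T] → R be the Drinfeld module defined by φ_T = τ^n. Let p ∈ F_q[T] be a monic irreducible polynomial of degree s with p ≠ T. Then every nonzero twisted polynomial u ∈ R with deg_τ(u) ≤ s−1 acts invertibly on the p-torsion module φ[p]; i.e., u(x) has no nonzero root among the roots of φ_p(x). -/

import Mathlib

/-- The twisted polynomial ring `R = k{τ}` over `k = F_{q^n}`, axiomatized. -/
structure TwistedPolynomialRing (q : ℕ) (k : Type) [Field k] (R : Type) [Ring R] [Module k R] where
  ι : k →+* R
  τ : R
  tau_comm : ∀ a : k, τ * ι a = ι (a ^ q) * τ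
  smul_def : ∀ (a : k) (r : R), a • r = ι a * r
  basis : Module.Basis ℕ k R
  basis_eq : ∀ i : ℕ, basis i = τ ^ i

variable {q : ℕ} {k R : Type} [Field k] [Ring R] [Module k R]

/-- The action of a twisted polynomial `f = Σ aᵢ τ^i` as the `F_q`-linear
polynomial `x ↦ Σ aᵢ x^{q^i}` on a `k`-algebra `Ω`. -/
noncomputable def TwistedPolynomialRing.act (T : TwistedPolynomialRing q k R)
    {Ω : Type} [CommRing Ω] [Algebra k Ω] (f : R) (x : Ω) : Ω :=
  (T.basis.repr f).sum fun i a => algebraMap k Ω a * x ^ q ^ i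

/-- **Invertibility of low-degree twisted polynomials on `φ[p]` for `φ_T = τ^n`.**
Let `k = F_{q^n}`, `φ` the Drinfeld module with `φ_T = τ^n`, and `p ∈ F_q[T]` a
monic irreducible polynomial of degree `s`, `p ≠ T`.  Then every nonzero `u ∈ R`
with `deg_τ u ≤ s - 1` acts invertibly on `φ[p]`: `u(β) ≠ 0` for every nonzero
root `β` of `φ_p(x)` in an algebraic closure `Ω` of `k`. -/
theorem low_degree_invertible_on_torsion
    {n s : ℕ} (hn : 0 < n) (hs : 0 < s)
    {F : Type} [Field F] [Fintype F] (hqcard : Fintype.card F = q)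
    [Fintype k] [Algebra F k] (hk : Fintype.card k = q ^ n)
    (T : TwistedPolynomialRing q k R)
    {Ω : Type} [Field Ω] [Algebra k Ω] [IsAlgClosed Ω]
    (p : Polynomial F) (hpmonic : p.Monic) (hpirr : Irreducible p)
    (hpdeg : p.natDegree = s) (hpT : p ≠ Polynomial.X) :
    ∀ u : R, u ≠ 0 → (∀ i : ℕ, s ≤ i → T.basis.repr u i = 0) →
      ∀ β : Ω, β ≠ 0 →
        T.act (Polynomial.eval₂ (T.ι.comp (algebraMap F k)) (T.τ ^ n) p) β = 0 →
        T.act u β ≠ 0 := by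
  classical
  intro u hu husupp β hβ hβp huβ
  -- basic numerics
  have hq1 : 1 < q := by rw [← hqcard]; exact Fintype.one_lt_card
  have hq0 : 0 < q := lt_trans one_pos hq1
  -- characteristic setup
  letI : Algebra F Ω := ((algebraMap k Ω).comp (algebraMap F k)).toAlgebra
  have halg : ∀ c : F, algebraMap F Ω c = algebraMap k Ω (algebraMap F k c) := fun c => rfl
  set p0 := ringChar F with hp0def
  haveI : CharP F p0 := ringChar.charP F
  obtain ⟨e, hp0prime, hcardF⟩ := FiniteField.card F p0
  haveI : Fact p0.Prime := ⟨hp0prime⟩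
  have hqp0 : q = p0 ^ (e : ℕ) := by rw [← hqcard, hcardF]
  have hFΩinj : Function.Injective (algebraMap F Ω) := (algebraMap F Ω).injective
  haveI : CharP Ω p0 := charP_of_injective_ringHom hFΩinj p0
  -- Frobenius-type additivity in Ω
  have hadd : ∀ (x y : Ω) (m : ℕ), (x + y) ^ q ^ m = x ^ q ^ m + y ^ q ^ m := by
    intro x y m
    rw [hqp0, ← pow_mul, add_pow_char_pow]
  -- F-scalars are fixed by q-th powers
  have hFfix : ∀ (c : F) (i : ℕ), c ^ q ^ i = c := by
    intro c i
    induction i with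
    | zero => simp
    | succ i ih => rw [pow_succ, pow_mul, ih, ← hqcard, FiniteField.pow_card]
  -- k-scalars are fixed by q^n-th powers
  have hkfix : ∀ a : k, a ^ q ^ n = a := by
    intro a; rw [← hk]; exact FiniteField.pow_card a
  ------------------------------------------------------------------
  -- Part 1 : the twisted action of a poly `f` with coefficients in `k`
  ------------------------------------------------------------------
  have hact_lin : ∀ f : R, T.act f β
      = Finsupp.linearCombination k (fun i => β ^ q ^ i) (T.basis.repr f) := by
    intro f
    rw [Finsupp.linearCombination_apply, TwistedPolynomialRing.act]
    exact Finsupp.sum_congr (fun i _ => (Algebra.smul_def _ _).symm)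
  have hrepr : ∀ (a : k) (m : ℕ), T.basis.repr (T.ι a * T.τ ^ m) = Finsupp.single m a := by
    intro a m
    rw [← T.smul_def, ← T.basis_eq, map_smul, T.basis.repr_self, Finsupp.smul_single,
      smul_eq_mul, mul_one]
  -- Frobenius as an F-linear endomorphism of Ω
  let fr : Ω →ₗ[F] Ω :=
    { toFun := fun x => x ^ q
      map_add' := fun x y => by simpa using hadd x y 1
      map_smul' := fun c x => by
        simp only [Algebra.smul_def, mul_pow, ← map_pow, RingHom.id_apply]
        rw [show c ^ q = c by simpa using hFfix c 1] }
  have frpow : ∀ (m : ℕ) (x : Ω), (fr ^ m) x = x ^ q ^ m := by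
    intro m
    induction m with
    | zero => intro x; simp
    | succ m ih =>
      intro x
      rw [pow_succ, Module.End.mul_apply, show fr x = x ^ q from rfl, ih, ← pow_mul,
        ← pow_succ']
  -- evaluation map  g ↦ g(Fr^n)(β)
  let Φ : Polynomial F → Ω := fun g => (Polynomial.aeval (fr ^ n) g) β
  have hΦ : ∀ (g : Polynomial F) (N : ℕ), g.natDegree < N →
      Φ g = ∑ i ∈ Finset.range N, algebraMap F Ω (g.coeff i) * β ^ q ^ (n * i) := by
    intro g N hN
    show (Polynomial.aeval (fr ^ n) g) β = _
    rw [Polynomial.aeval_eq_sum_range' hN, LinearMap.sum_apply]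
    refine Finset.sum_congr rfl fun i _ => ?_
    rw [LinearMap.smul_apply, ← pow_mul, frpow, Algebra.smul_def, mul_comm n i, pow_mul]
  -- β is a root of p(Fr^n)
  have hΦp : Φ p = 0 := by
    rw [hΦ p (s + 1) (by omega)]
    rw [hact_lin] at hβp
    rw [Polynomial.eval₂_eq_sum_range' _ (show p.natDegree < s + 1 by omega)] at hβp
    rw [← hβp]
    rw [map_sum, map_sum]
    refine (Finset.sum_congr rfl fun i _ => ?_).symm
    rw [RingHom.coe_comp, Function.comp_apply, ← pow_mul, hrepr, Finsupp.linearCombination_single,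
      Algebra.smul_def, halg]
  ------------------------------------------------------------------
  -- Part 2 : Φ g ≠ 0 for nonzero g of degree < s
  ------------------------------------------------------------------
  have hkey : ∀ g : Polynomial F, g ≠ 0 → g.degree < p.degree → Φ g ≠ 0 := by
    intro g hg hdeg hΦg
    have hndvd : ¬ p ∣ g := fun hdvd => hg (Polynomial.eq_zero_of_dvd_of_degree_lt hdvd hdeg)
    have hcop : IsCoprime p g := hpirr.coprime_iff_not_dvd.mpr hndvd
    obtain ⟨a, b, hab⟩ := hcop
    have h1 : (Polynomial.aeval (fr ^ n) (a * p + b * g)) β = β := by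
      rw [hab]; simp
    rw [map_add, map_mul, map_mul, LinearMap.add_apply, Module.End.mul_apply,
      Module.End.mul_apply] at h1
    have hp0' : (Polynomial.aeval (fr ^ n) p) β = 0 := hΦp
    have hg0' : (Polynomial.aeval (fr ^ n) g) β = 0 := hΦg
    rw [hp0', hg0', map_zero, map_zero, add_zero] at h1
    exact hβ h1.symm
  ------------------------------------------------------------------
  -- Part 3 : the torsion set V of cardinality q^s
  ------------------------------------------------------------------
  let gp : (Fin s → F) → Polynomial F := fun c => ∑ j : Fin s, Polynomial.C (c j) * Polynomial.X ^ (j : ℕ)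
  have hgp_coeff : ∀ (c : Fin s → F) (j : Fin s), (gp c).coeff (j : ℕ) = c j := by
    intro c j
    rw [show (gp c).coeff (j : ℕ) = ∑ i : Fin s, (Polynomial.C (c i) * Polynomial.X ^ (i : ℕ)).coeff (j : ℕ) from
      Polynomial.finset_sum_coeff _ _ _]
    rw [Finset.sum_eq_single j]
    · simp
    · intro i _ hij
      rw [Polynomial.coeff_C_mul, Polynomial.coeff_X_pow, if_neg (by
        exact fun h => hij (Fin.ext h.symm)), mul_zero]
    · simp
  have hgp_deg : ∀ c : Fin s → F, (gp c).degree < p.degree := by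
    intro c
    have hps : p.degree = (s : WithBot ℕ) := by
      rw [Polynomial.degree_eq_natDegree hpmonic.ne_zero, hpdeg]
    rw [hps]
    refine lt_of_le_of_lt (Polynomial.degree_sum_le _ _) ?_
    rw [Finset.sup_lt_iff (by exact_mod_cast WithBot.bot_lt_coe s)]
    intro j _
    refine lt_of_le_of_lt (Polynomial.degree_C_mul_X_pow_le _ _) ?_
    exact_mod_cast j.isLt
  have hΦinj : Function.Injective (fun c : Fin s → F => Φ (gp c)) := by
    intro c c' hcc
    by_contra hne
    have hgne : gp c - gp c' ≠ 0 := by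
      intro h0
      apply hne
      funext j
      have := congrArg (fun g : Polynomial F => g.coeff (j : ℕ)) h0
      simpa [Polynomial.coeff_sub, hgp_coeff c j, hgp_coeff c' j, sub_eq_zero] using this
    have hgdeg : (gp c - gp c').degree < p.degree :=
      lt_of_le_of_lt (Polynomial.degree_sub_le _ _) (max_lt (hgp_deg c) (hgp_deg c'))
    refine hkey _ hgne hgdeg ?_
    show (Polynomial.aeval (fr ^ n) (gp c - gp c')) β = 0
    rw [map_sub, LinearMap.sub_apply]
    exact sub_eq_zero.mpr hcc
  let V : Finset Ω := Finset.image (fun c : Fin s → F => Φ (gp c)) Finset.univ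
  have hVcard : V.card = q ^ s := by
    rw [Finset.card_image_of_injective _ hΦinj, Finset.card_univ, Fintype.card_fun,
      Fintype.card_fin, hqcard]
  ------------------------------------------------------------------
  -- Part 4 : the linearized polynomial P attached to u kills V
  ------------------------------------------------------------------
  let b : ℕ → Ω := fun i => algebraMap k Ω (T.basis.repr u i)
  let Uval : Ω → Ω := fun x => ∑ i ∈ Finset.range s, b i * x ^ q ^ i
  have hUact : ∀ x : Ω, T.act u x = Uval x := by
    intro x
    rw [TwistedPolynomialRing.act]
    refine Finsupp.sum_of_support_subset _ ?_ _ (by simp)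
    intro i hi
    rw [Finsupp.mem_support_iff] at hi
    rw [Finset.mem_range]
    by_contra h
    exact hi (husupp i (by omega))
  have hUβ : Uval β = 0 := by rw [← hUact]; exact huβ
  -- U semicommutes with q^n-power
  have hUfr : ∀ x : Ω, Uval (x ^ q ^ n) = (Uval x) ^ q ^ n := by
    intro x
    have : ∀ t : Finset ℕ, (∑ i ∈ t, b i * x ^ q ^ i) ^ q ^ n
        = ∑ i ∈ t, b i * (x ^ q ^ n) ^ q ^ i := by
      intro t
      induction t using Finset.induction with
      | empty => simp [zero_pow (pow_ne_zero n hq0.ne')]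
      | insert _ _ hnotmem ih =>
        rw [Finset.sum_insert hnotmem, Finset.sum_insert hnotmem, hadd, ih, mul_pow,
          ← pow_mul, ← pow_mul, mul_comm (q ^ _) (q ^ n)]
        congr 2
        show (algebraMap k Ω _) ^ q ^ n = _
        rw [← map_pow, hkfix]
    exact (this (Finset.range s)).symm
  -- U is additive, F-linear, kills 0
  have hU0 : Uval 0 = 0 := by
    refine Finset.sum_eq_zero fun i _ => ?_
    rw [zero_pow (pow_ne_zero i hq0.ne'), mul_zero]
  have hUadd : ∀ x y : Ω, Uval (x + y) = Uval x + Uval y := by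
    intro x y
    rw [← Finset.sum_add_distrib]
    exact Finset.sum_congr rfl fun i _ => by rw [hadd, mul_add]
  have hUsmul : ∀ (c : F) (x : Ω), Uval (algebraMap F Ω c * x) = algebraMap F Ω c * Uval x := by
    intro c x
    rw [Finset.mul_sum]
    refine Finset.sum_congr rfl fun i _ => ?_
    rw [mul_pow, ← map_pow, hFfix, mul_left_comm]
  -- U kills all iterates of β under Fr^n
  have hUiter : ∀ i : ℕ, Uval (β ^ q ^ (n * i)) = 0 := by
    intro i
    induction i with
    | zero => simpa using hUβ
    | succ i ih =>
      have : β ^ q ^ (n * (i + 1)) = (β ^ q ^ (n * i)) ^ q ^ n := by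
        rw [← pow_mul, ← pow_add]
        ring_nf
      rw [this, hUfr, ih, zero_pow (pow_ne_zero n hq0.ne')]
  -- hence U kills every Φ g
  have hUΦ : ∀ g : Polynomial F, Uval (Φ g) = 0 := by
    intro g
    rw [hΦ g (g.natDegree + 1) (by omega)]
    have : ∀ t : Finset ℕ, Uval (∑ i ∈ t, algebraMap F Ω (g.coeff i) * β ^ q ^ (n * i)) = 0 := by
      intro t
      induction t using Finset.induction with
      | empty => simpa using hU0
      | insert _ _ hnotmem ih =>
        rw [Finset.sum_insert hnotmem, hUadd, ih, add_zero, hUsmul, hUiter, mul_zero]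
    exact this _
  ------------------------------------------------------------------
  -- Part 5 : counting roots of P
  ------------------------------------------------------------------
  let P : Polynomial Ω := ∑ i ∈ Finset.range s, Polynomial.C (b i) * Polynomial.X ^ (q ^ i)
  have hPeval : ∀ x : Ω, P.eval x = Uval x := by
    intro x
    rw [Polynomial.eval_finset_sum]
    exact Finset.sum_congr rfl fun i _ => by simp
  -- P ≠ 0
  obtain ⟨i0, hi0⟩ : ∃ i : ℕ, T.basis.repr u i ≠ 0 := by
    by_contra h
    push_neg at h
    exact hu (T.basis.repr.injective (by ext i; simpa using h i))
  have hi0s : i0 < s := by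
    by_contra h
    exact hi0 (husupp i0 (by omega))
  have hPcoeff : P.coeff (q ^ i0) = b i0 := by
    rw [show P.coeff (q ^ i0) = ∑ i ∈ Finset.range s,
        (Polynomial.C (b i) * Polynomial.X ^ (q ^ i)).coeff (q ^ i0) from
      Polynomial.finset_sum_coeff _ _ _]
    rw [Finset.sum_eq_single i0]
    · simp
    · intro i _ hii
      rw [Polynomial.coeff_C_mul, Polynomial.coeff_X_pow,
        if_neg (fun h => hii (Nat.pow_right_injective hq1 h.symm)), mul_zero]
    · intro h
      exact absurd (Finset.mem_range.mpr hi0s) h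
  have hPne : P ≠ 0 := by
    intro h0
    apply hi0
    have : b i0 = 0 := by rw [← hPcoeff, h0, Polynomial.coeff_zero]
    exact (map_eq_zero (algebraMap k Ω)).mp this
  have hPdeg : P.natDegree ≤ q ^ (s - 1) := by
    refine Polynomial.natDegree_sum_le_of_forall_le _ _ fun i hi => ?_
    refine le_trans (Polynomial.natDegree_C_mul_le _ _) ?_
    refine le_trans (Polynomial.natDegree_X_pow_le _) ?_
    exact Nat.pow_le_pow_right hq0 (by
      rw [Finset.mem_range] at hi; omega)
  -- all elements of V are roots of P
  have hVroots : V ⊆ P.roots.toFinset := by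
    intro x hx
    rw [Multiset.mem_toFinset, Polynomial.mem_roots hPne]
    rw [Finset.mem_image] at hx
    obtain ⟨c, _, rfl⟩ := hx
    rw [Polynomial.IsRoot, hPeval]
    exact hUΦ (gp c)
  have hfinal : q ^ s ≤ q ^ (s - 1) := by
    calc q ^ s = V.card := hVcard.symm
    _ ≤ P.roots.toFinset.card := Finset.card_le_card hVroots
    _ ≤ Multiset.card P.roots := Multiset.toFinset_card_le _
    _ ≤ P.natDegree := Polynomial.card_roots' P
    _ ≤ q ^ (s - 1) := hPdeg
  have : q ^ (s - 1) < q ^ s := Nat.pow_lt_pow_right hq1 (by omega)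
  omega
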